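/- For every ε > 0 there exist an open set S ⊂ (0,1) with Lebesgue measure L¹(S) < ε which is dense in (0,1), and a Lipschitz horizontal curve γ: [0,1] → ℝ⁴ in the Engel group such that: (1) γ'(t) = (0,1,0,0) for almost every t ∈ (0,1) ∖ S; and (2) the fourth component γ₄ is strictly decreasing on (0,1) ∖ S, i.e. if a, b ∈ (0,1) ∖ S and a < b then γ₄(b) < γ₄(a). -/

import Mathlib

open MeasureTheory Set

/-- A vector `u` is horizontal at the point `ζ` in the Engel group. -/
def EngelHoriz (ζ u : EuclideanSpace ℝ (Fin 4)) : Prop :=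
  u 2 = u 1 * ζ 0 ∧ u 3 = u 1 * (ζ 0) ^ 2 / 2

/-- The vector `(0,1,0,0)` in ℝ⁴. -/
def e₂ : EuclideanSpace ℝ (Fin 4) := WithLp.toLp 2 (fun i => if i = 1 then 1 else 0)

open Filter Topology Metric
open scoped ENNReal

namespace BadEngel

noncomputable section
open scoped Classical

/-! ### profiles -/

def pphi (s : ℝ) : ℝ := max (max (min (min 1 (6*s)) (5-12*s)) (min 0 (6*s-5))) (-1)
def ppsi (s : ℝ) : ℝ := max (max (min 0 (1-6*s)) (-1) + max (min 0 (3-6*s)) (-1)) (18*s-17)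
def pchi (s : ℝ) : ℝ := ppsi s - s
def pome (s : ℝ) : ℝ := max (-1) (min 0 (max (1-6*s) (6*s-4)))

lemma pphi_zero : pphi 0 = 0 := by norm_num [pphi]
lemma pphi_one : pphi 1 = 0 := by norm_num [pphi]
lemma pchi_zero : pchi 0 = 0 := by norm_num [pchi, ppsi]
lemma pchi_one : pchi 1 = 0 := by norm_num [pchi, ppsi]
lemma pome_zero : pome 0 = 0 := by norm_num [pome]
lemma pome_one : pome 1 = 0 := by norm_num [pome]

lemma pphi_lip (x y : ℝ) : |pphi x - pphi y| ≤ 20 * |x - y| := by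
  have h6 : |6*x - 6*y| ≤ 20 * |x-y| := by
    rw [show 6*x - 6*y = 6*(x-y) by ring, abs_mul]
    have := abs_nonneg (x - y); rw [abs_of_nonneg (by norm_num : (0:ℝ) ≤ 6)]; nlinarith
  have h12 : |(5-12*x) - (5-12*y)| ≤ 20 * |x-y| := by
    rw [show (5-12*x) - (5-12*y) = -12*(x-y) by ring, abs_mul]
    have := abs_nonneg (x - y)
    rw [show |(-12:ℝ)| = 12 by norm_num]; nlinarith
  have h65 : |(6*x-5) - (6*y-5)| ≤ 20 * |x-y| := by
    rw [show (6*x-5) - (6*y-5) = 6*(x-y) by ring, abs_mul]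
    have := abs_nonneg (x - y); rw [abs_of_nonneg (by norm_num : (0:ℝ) ≤ 6)]; nlinarith
  have hc : ∀ c : ℝ, |c - c| ≤ 20 * |x - y| := by
    intro c; rw [sub_self, abs_zero]; positivity
  unfold pphi
  refine le_trans (abs_max_sub_max_le_max _ _ _ _) (max_le (le_trans (abs_max_sub_max_le_max _ _ _ _) (max_le ?_ ?_)) (hc (-1)))
  · refine le_trans (abs_min_sub_min_le_max _ _ _ _) (max_le (le_trans (abs_min_sub_min_le_max _ _ _ _) (max_le (hc 1) h6)) h12)
  · exact le_trans (abs_min_sub_min_le_max _ _ _ _) (max_le (hc 0) h65)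

lemma ppsi_lip (x y : ℝ) : |ppsi x - ppsi y| ≤ 18 * |x - y| := by
  have habs := abs_nonneg (x - y)
  have h6 : |(1-6*x) - (1-6*y)| ≤ 6 * |x-y| := by
    rw [show (1-6*x) - (1-6*y) = -6*(x-y) by ring, abs_mul]
    rw [show |(-6:ℝ)| = 6 by norm_num]
  have h6' : |(3-6*x) - (3-6*y)| ≤ 6 * |x-y| := by
    rw [show (3-6*x) - (3-6*y) = -6*(x-y) by ring, abs_mul]
    rw [show |(-6:ℝ)| = 6 by norm_num]
  have h18 : |(18*x-17) - (18*y-17)| ≤ 18 * |x-y| := by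
    rw [show (18*x-17) - (18*y-17) = 18*(x-y) by ring, abs_mul]
    rw [show |(18:ℝ)| = 18 by norm_num]
  have hc : ∀ c : ℝ, |c - c| ≤ 6 * |x - y| := by
    intro c; rw [sub_self, abs_zero]; positivity
  have ht1 : |max (min 0 (1-6*x)) (-1) - max (min 0 (1-6*y)) (-1)| ≤ 6 * |x - y| := by
    refine le_trans (abs_max_sub_max_le_max _ _ _ _) (max_le ?_ (hc (-1)))
    exact le_trans (abs_min_sub_min_le_max _ _ _ _) (max_le (hc 0) h6)
  have ht2 : |max (min 0 (3-6*x)) (-1) - max (min 0 (3-6*y)) (-1)| ≤ 6 * |x - y| := by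
    refine le_trans (abs_max_sub_max_le_max _ _ _ _) (max_le ?_ (hc (-1)))
    exact le_trans (abs_min_sub_min_le_max _ _ _ _) (max_le (hc 0) h6')
  unfold ppsi
  refine le_trans (abs_max_sub_max_le_max _ _ _ _) (max_le ?_ h18)
  calc |(max (min 0 (1-6*x)) (-1) + max (min 0 (3-6*x)) (-1)) -
        (max (min 0 (1-6*y)) (-1) + max (min 0 (3-6*y)) (-1))|
      ≤ |max (min 0 (1-6*x)) (-1) - max (min 0 (1-6*y)) (-1)| +
        |max (min 0 (3-6*x)) (-1) - max (min 0 (3-6*y)) (-1)| := by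
        rw [show (max (min 0 (1-6*x)) (-1) + max (min 0 (3-6*x)) (-1)) -
          (max (min 0 (1-6*y)) (-1) + max (min 0 (3-6*y)) (-1)) =
          (max (min 0 (1-6*x)) (-1) - max (min 0 (1-6*y)) (-1)) +
          (max (min 0 (3-6*x)) (-1) - max (min 0 (3-6*y)) (-1)) by ring]
        exact abs_add_le _ _
    _ ≤ 6 * |x-y| + 6 * |x-y| := add_le_add ht1 ht2
    _ ≤ 18 * |x-y| := by nlinarith
  
lemma pchi_lip (x y : ℝ) : |pchi x - pchi y| ≤ 20 * |x - y| := by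
  have h := ppsi_lip x y
  have habs := abs_nonneg (x - y)
  calc |pchi x - pchi y| = |(ppsi x - ppsi y) + (-(x - y))| := by unfold pchi; ring_nf
    _ ≤ |ppsi x - ppsi y| + |(-(x-y))| := abs_add_le _ _
    _ ≤ 18 * |x - y| + |x - y| := by rw [abs_neg]; exact add_le_add h le_rfl
    _ ≤ 20 * |x - y| := by nlinarith

lemma pome_lip (x y : ℝ) : |pome x - pome y| ≤ 20 * |x - y| := by
  have habs := abs_nonneg (x - y)
  have h6 : |(1-6*x) - (1-6*y)| ≤ 20 * |x-y| := by
    rw [show (1-6*x) - (1-6*y) = -6*(x-y) by ring, abs_mul]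
    rw [show |(-6:ℝ)| = 6 by norm_num]; nlinarith
  have h6' : |(6*x-4) - (6*y-4)| ≤ 20 * |x-y| := by
    rw [show (6*x-4) - (6*y-4) = 6*(x-y) by ring, abs_mul]
    rw [show |(6:ℝ)| = 6 by norm_num]; nlinarith
  have hc : ∀ c : ℝ, |c - c| ≤ 20 * |x - y| := by
    intro c; rw [sub_self, abs_zero]; positivity
  unfold pome
  refine le_trans (abs_max_sub_max_le_max _ _ _ _) (max_le (hc (-1)) ?_)
  refine le_trans (abs_min_sub_min_le_max _ _ _ _) (max_le (hc 0) ?_)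
  exact le_trans (abs_max_sub_max_le_max _ _ _ _) (max_le h6 h6')

/-! ### phase evaluations -/

lemma pphi_eq1 {s : ℝ} (h0 : 0 < s) (h1 : s < 1/6) : pphi s = 6*s := by
  unfold pphi
  rw [min_eq_right (show 6*s ≤ 1 by linarith),
      min_eq_left (show 6*s ≤ 5 - 12*s by linarith),
      min_eq_right (show 6*s - 5 ≤ 0 by linarith),
      max_eq_left (show 6*s - 5 ≤ 6*s by linarith),
      max_eq_left (show (-1:ℝ) ≤ 6*s by linarith)]

lemma pphi_eq2 {s : ℝ} (h0 : 1/6 < s) (h1 : s < 1/3) : pphi s = 1 := by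
  unfold pphi
  rw [min_eq_left (show (1:ℝ) ≤ 6*s by linarith),
      min_eq_left (show (1:ℝ) ≤ 5 - 12*s by linarith),
      min_eq_right (show 6*s - 5 ≤ 0 by linarith),
      max_eq_left (show 6*s - 5 ≤ 1 by linarith),
      max_eq_left (show (-1:ℝ) ≤ 1 by norm_num)]

lemma pphi_eq3 {s : ℝ} (h0 : 1/3 < s) (h1 : s < 1/2) : pphi s = 5 - 12*s := by
  unfold pphi
  rw [min_eq_left (show (1:ℝ) ≤ 6*s by linarith),
      min_eq_right (show 5 - 12*s ≤ 1 by linarith),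
      min_eq_right (show 6*s - 5 ≤ 0 by linarith),
      max_eq_left (show 6*s - 5 ≤ 5 - 12*s by linarith),
      max_eq_left (show (-1:ℝ) ≤ 5 - 12*s by linarith)]

lemma pphi_eq4 {s : ℝ} (h0 : 1/2 < s) (h1 : s < 2/3) : pphi s = -1 := by
  unfold pphi
  rw [min_eq_left (show (1:ℝ) ≤ 6*s by linarith),
      min_eq_right (show 5 - 12*s ≤ 1 by linarith),
      min_eq_right (show 6*s - 5 ≤ 0 by linarith),
      max_eq_right (show max (5 - 12*s) (6*s - 5) ≤ -1 from max_le (by linarith) (by linarith))]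

lemma pphi_eq5 {s : ℝ} (h0 : 2/3 < s) (h1 : s < 5/6) : pphi s = 6*s - 5 := by
  unfold pphi
  rw [min_eq_left (show (1:ℝ) ≤ 6*s by linarith),
      min_eq_right (show 5 - 12*s ≤ 1 by linarith),
      min_eq_right (show 6*s - 5 ≤ 0 by linarith),
      max_eq_right (show 5 - 12*s ≤ 6*s - 5 by linarith),
      max_eq_left (show (-1:ℝ) ≤ 6*s - 5 by linarith)]

lemma pphi_eq6 {s : ℝ} (h0 : 5/6 < s) (h1 : s < 1) : pphi s = 0 := by
  unfold pphi
  rw [min_eq_left (show (1:ℝ) ≤ 6*s by linarith),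
      min_eq_right (show 5 - 12*s ≤ 1 by linarith),
      min_eq_left (show (0:ℝ) ≤ 6*s - 5 by linarith),
      max_eq_right (show 5 - 12*s ≤ 0 by linarith),
      max_eq_left (show (-1:ℝ) ≤ 0 by norm_num)]

lemma ppsi_eq1 {s : ℝ} (h0 : 0 < s) (h1 : s < 1/6) : ppsi s = 0 := by
  unfold ppsi
  rw [min_eq_left (show (0:ℝ) ≤ 1-6*s by linarith),
      min_eq_left (show (0:ℝ) ≤ 3-6*s by linarith),
      max_eq_left (show (-1:ℝ) ≤ 0 by norm_num),
      max_eq_left (show 18*s - 17 ≤ 0 + 0 by linarith)]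
  norm_num

lemma ppsi_eq2 {s : ℝ} (h0 : 1/6 < s) (h1 : s < 1/3) : ppsi s = 1 - 6*s := by
  unfold ppsi
  rw [min_eq_right (show 1-6*s ≤ 0 by linarith),
      min_eq_left (show (0:ℝ) ≤ 3-6*s by linarith),
      max_eq_left (show (-1:ℝ) ≤ 1-6*s by linarith),
      max_eq_left (show (-1:ℝ) ≤ 0 by norm_num),
      max_eq_left (show 18*s - 17 ≤ (1-6*s) + 0 by linarith)]
  ring

lemma ppsi_eq3 {s : ℝ} (h0 : 1/3 < s) (h1 : s < 1/2) : ppsi s = -1 := by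
  unfold ppsi
  rw [min_eq_right (show 1-6*s ≤ 0 by linarith),
      min_eq_left (show (0:ℝ) ≤ 3-6*s by linarith),
      max_eq_right (show 1-6*s ≤ -1 by linarith),
      max_eq_left (show (-1:ℝ) ≤ 0 by norm_num),
      max_eq_left (show 18*s - 17 ≤ (-1) + 0 by linarith)]
  ring

lemma ppsi_eq4 {s : ℝ} (h0 : 1/2 < s) (h1 : s < 2/3) : ppsi s = 2 - 6*s := by
  unfold ppsi
  rw [min_eq_right (show 1-6*s ≤ 0 by linarith),
      min_eq_right (show 3-6*s ≤ 0 by linarith),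
      max_eq_right (show 1-6*s ≤ -1 by linarith),
      max_eq_left (show (-1:ℝ) ≤ 3-6*s by linarith),
      max_eq_left (show 18*s - 17 ≤ (-1) + (3-6*s) by linarith)]
  ring

lemma ppsi_eq5 {s : ℝ} (h0 : 2/3 < s) (h1 : s < 5/6) : ppsi s = -2 := by
  unfold ppsi
  rw [min_eq_right (show 1-6*s ≤ 0 by linarith),
      min_eq_right (show 3-6*s ≤ 0 by linarith),
      max_eq_right (show 1-6*s ≤ -1 by linarith),
      max_eq_right (show 3-6*s ≤ -1 by linarith),
      max_eq_left (show 18*s - 17 ≤ (-1) + (-1) by linarith)]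
  ring

lemma ppsi_eq6 {s : ℝ} (h0 : 5/6 < s) (h1 : s < 1) : ppsi s = 18*s - 17 := by
  unfold ppsi
  rw [min_eq_right (show 1-6*s ≤ 0 by linarith),
      min_eq_right (show 3-6*s ≤ 0 by linarith),
      max_eq_right (show 1-6*s ≤ -1 by linarith),
      max_eq_right (show 3-6*s ≤ -1 by linarith),
      max_eq_right (show (-1) + (-1) ≤ 18*s - 17 by linarith)]

lemma pome_eq1 {s : ℝ} (h0 : 0 < s) (h1 : s < 1/6) : pome s = 0 := by
  unfold pome
  rw [max_eq_left (show 6*s-4 ≤ 1-6*s by linarith),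
      min_eq_left (show (0:ℝ) ≤ 1-6*s by linarith),
      max_eq_right (show (-1:ℝ) ≤ 0 by norm_num)]

lemma pome_eq2 {s : ℝ} (h0 : 1/6 < s) (h1 : s < 1/3) : pome s = 1-6*s := by
  unfold pome
  rw [max_eq_left (show 6*s-4 ≤ 1-6*s by linarith),
      min_eq_right (show 1-6*s ≤ 0 by linarith),
      max_eq_right (show (-1:ℝ) ≤ 1-6*s by linarith)]

lemma pome_eq3 {s : ℝ} (h0 : 1/3 < s) (h1 : s < 1/2) : pome s = -1 := by
  unfold pome
  rw [min_eq_right (show max (1-6*s) (6*s-4) ≤ 0 from max_le (by linarith) (by linarith)),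
      max_eq_left (show max (1-6*s) (6*s-4) ≤ -1 from max_le (by linarith) (by linarith))]

lemma pome_eq4 {s : ℝ} (h0 : 1/2 < s) (h1 : s < 2/3) : pome s = 6*s-4 := by
  unfold pome
  rw [max_eq_right (show 1-6*s ≤ 6*s-4 by linarith),
      min_eq_right (show 6*s-4 ≤ 0 by linarith),
      max_eq_right (show (-1:ℝ) ≤ 6*s-4 by linarith)]

lemma pome_eq5 {s : ℝ} (h0 : 2/3 < s) (h1 : s < 1) : pome s = 0 := by
  unfold pome
  rw [max_eq_right (show 1-6*s ≤ 6*s-4 by linarith),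
      min_eq_left (show (0:ℝ) ≤ 6*s-4 by linarith),
      max_eq_right (show (-1:ℝ) ≤ 0 by norm_num)]

/-! ### component structure of S -/

section Main

variable (S : Set ℝ)



def P (t : ℝ) : ℝ := sSup (Sᶜ ∩ Iic t)
def Q (t : ℝ) : ℝ := sInf (Sᶜ ∩ Ici t)
def L (t : ℝ) : ℝ := Q S t - P S t
def sg (t : ℝ) : ℝ := (t - P S t) / L S t

def EE : (Fin 4 → ℝ) ≃L[ℝ] EuclideanSpace ℝ (Fin 4) :=
  (PiLp.continuousLinearEquiv 2 ℝ (fun _ : Fin 4 => ℝ)).symm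


def BB (ρ : ℝ → ℝ) (k : ℕ) (t : ℝ) : ℝ := if t ∈ S then (L S t)^k * ρ (sg S t) else 0

def v3 (t : ℝ) : ℝ :=
  if t ∈ S ∧ (sg S t ∈ Ico (1/6:ℝ) (1/3) ∪ Ico (1/2:ℝ) (2/3)) then -3*(L S t)^2 else 0

def c0 := BB S pphi 1
def c1 (t : ℝ) := t + BB S pchi 1 t
def c2 := BB S pome 2
def c3 (t : ℝ) := ∫ u in (0:ℝ)..t, v3 S u

def curve (t : ℝ) : EuclideanSpace ℝ (Fin 4) := EE ![c0 S t, c1 S t, c2 S t, c3 S t]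

def gv (t : ℝ) : Fin 4 → ℝ :=
  if t ∉ S then ![0,1,0,0] else
  if sg S t < 1/6 then ![6,0,0,0] else
  if sg S t < 1/3 then ![0,-6,-6*L S t,-3*(L S t)^2] else
  if sg S t < 1/2 then ![-12,0,0,0] else
  if sg S t < 2/3 then ![0,-6,6*L S t,-3*(L S t)^2] else
  if sg S t < 5/6 then ![6,0,0,0] else ![0,18,0,0]

def gvec (t : ℝ) : EuclideanSpace ℝ (Fin 4) := EE (gv S t)


variable {S}
variable (hSo : IsOpen S) (hS1 : S ⊆ Ioo 0 1)
include hSo hS1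

lemma P_ne (t : ℝ) : (Sᶜ ∩ Iic t).Nonempty := by
  refine ⟨min t 0, fun h => ?_, mem_Iic.2 (min_le_left t 0)⟩
  have := (hS1 h).1; have := min_le_right t 0; linarith

lemma P_bdd (t : ℝ) : BddAbove (Sᶜ ∩ Iic t) := ⟨t, fun x hx => hx.2⟩

lemma Q_ne (t : ℝ) : (Sᶜ ∩ Ici t).Nonempty := by
  refine ⟨max t 1, fun h => ?_, mem_Ici.2 (le_max_left t 1)⟩
  have := (hS1 h).2; have := le_max_right t 1; linarith

lemma Q_bdd (t : ℝ) : BddBelow (Sᶜ ∩ Ici t) := ⟨t, fun x hx => hx.2⟩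

lemma P_not_mem (t : ℝ) : P S t ∉ S := by
  have := (hSo.isClosed_compl.inter isClosed_Iic).csSup_mem (P_ne hSo hS1 t) (P_bdd hSo hS1 t)
  exact this.1

lemma Q_not_mem (t : ℝ) : Q S t ∉ S := by
  have := (hSo.isClosed_compl.inter isClosed_Ici).csInf_mem (Q_ne hSo hS1 t) (Q_bdd hSo hS1 t)
  exact this.1

lemma P_le (t : ℝ) : P S t ≤ t := csSup_le (P_ne hSo hS1 t) fun _ hx => hx.2

lemma le_Q (t : ℝ) : t ≤ Q S t := le_csInf (Q_ne hSo hS1 t) fun _ hx => hx.2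

lemma P_lt {t : ℝ} (ht : t ∈ S) : P S t < t :=
  lt_of_le_of_ne (P_le hSo hS1 t) fun h => (P_not_mem hSo hS1 t) (h.symm ▸ ht)

lemma lt_Q {t : ℝ} (ht : t ∈ S) : t < Q S t :=
  lt_of_le_of_ne (le_Q hSo hS1 t) fun h => (Q_not_mem hSo hS1 t) (h ▸ ht)

lemma P_nonneg {t : ℝ} (ht : t ∈ S) : 0 ≤ P S t := by
  refine le_csSup (P_bdd hSo hS1 t) ⟨fun h => by have := (hS1 h).1; linarith, ?_⟩
  exact (hS1 ht).1.le

lemma Q_le_one {t : ℝ} (ht : t ∈ S) : Q S t ≤ 1 := by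
  refine csInf_le (Q_bdd hSo hS1 t) ⟨fun h => by have := (hS1 h).2; linarith, ?_⟩
  exact (hS1 ht).2.le

lemma L_pos {t : ℝ} (ht : t ∈ S) : 0 < L S t :=
  sub_pos.2 (lt_trans (P_lt hSo hS1 ht) (lt_Q hSo hS1 ht))

lemma L_le_one {t : ℝ} (ht : t ∈ S) : L S t ≤ 1 := by
  have h1 := P_nonneg hSo hS1 ht; have h2 := Q_le_one hSo hS1 ht
  unfold L; linarith

lemma Ioo_PQ_subset (t : ℝ) : Ioo (P S t) (Q S t) ⊆ S := by
  intro u hu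
  by_contra hu'
  rcases le_total u t with h | h
  · exact absurd (le_csSup (P_bdd hSo hS1 t) ⟨hu', h⟩) (not_le.2 hu.1)
  · exact absurd (csInf_le (Q_bdd hSo hS1 t) ⟨hu', h⟩) (not_le.2 hu.2)

lemma P_congr {t u : ℝ} (hu : u ∈ Ioo (P S t) (Q S t)) : P S u = P S t := by
  refine le_antisymm (csSup_le (P_ne hSo hS1 u) fun x hx => ?_) ?_
  · by_contra hx'
    exact hx.1 (Ioo_PQ_subset hSo hS1 t ⟨not_le.1 hx', lt_of_le_of_lt hx.2 hu.2⟩)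
  · exact le_csSup (P_bdd hSo hS1 u) ⟨P_not_mem hSo hS1 t, hu.1.le⟩

lemma Q_congr {t u : ℝ} (hu : u ∈ Ioo (P S t) (Q S t)) : Q S u = Q S t := by
  refine le_antisymm ?_ (le_csInf (Q_ne hSo hS1 u) fun x hx => ?_)
  · exact csInf_le (Q_bdd hSo hS1 u) ⟨Q_not_mem hSo hS1 t, hu.2.le⟩
  · by_contra hx'
    exact hx.1 (Ioo_PQ_subset hSo hS1 t ⟨lt_of_lt_of_le hu.1 hx.2, not_le.1 hx'⟩)

lemma P_mono : Monotone (P S) := fun x y h =>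
  csSup_le_csSup (P_bdd hSo hS1 y) (P_ne hSo hS1 x) (inter_subset_inter_right _ (Iic_subset_Iic.2 h))

lemma Q_mono : Monotone (Q S) := fun x y h =>
  le_csInf (Q_ne hSo hS1 y) fun b hb => csInf_le (Q_bdd hSo hS1 x) ⟨hb.1, le_trans h hb.2⟩

lemma measurable_P : Measurable (P S) := (P_mono hSo hS1).measurable
lemma measurable_Q : Measurable (Q S) := (Q_mono hSo hS1).measurable
lemma measurable_L : Measurable (L S) := (measurable_Q hSo hS1).sub (measurable_P hSo hS1)
lemma measurable_sg : Measurable (sg S) :=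
  (measurable_id.sub (measurable_P hSo hS1)).div (measurable_L hSo hS1)

lemma sg_mem {t : ℝ} (ht : t ∈ S) : sg S t ∈ Ioo (0:ℝ) 1 := by
  have h1 := P_lt hSo hS1 ht
  have h2 := lt_Q hSo hS1 ht
  have hL := L_pos hSo hS1 ht
  constructor
  · exact div_pos (by linarith) hL
  · rw [sg, div_lt_one hL]; unfold L; linarith

lemma sg_formula {t u : ℝ} (hu : u ∈ Ioo (P S t) (Q S t)) :
    sg S u = (u - P S t) / L S t := by
  unfold sg L
  rw [P_congr hSo hS1 hu, Q_congr hSo hS1 hu]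

variable {ρ : ℝ → ℝ} {k : ℕ}
variable (hSo : IsOpen S) (hS1 : S ⊆ Ioo 0 1)
variable (hρ : ∀ x y, |ρ x - ρ y| ≤ 20 * |x - y|) (hρ0 : ρ 0 = 0) (hρ1 : ρ 1 = 0)
variable (hk : 1 ≤ k)

lemma BB_not_mem {t : ℝ} (ht : t ∉ S) : BB S ρ k t = 0 := if_neg ht

include hρ hρ0 in
lemma rho_le1 {s : ℝ} (hs : 0 ≤ s) : |ρ s| ≤ 20 * s := by
  have := hρ s 0; rw [hρ0, sub_zero, sub_zero] at this
  rwa [abs_of_nonneg hs] at this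

include hρ hρ1 in
lemma rho_le2 {s : ℝ} (hs : s ≤ 1) : |ρ s| ≤ 20 * (1 - s) := by
  have := hρ s 1; rw [hρ1, sub_zero] at this
  rwa [show |s - 1| = 1 - s from by rw [abs_sub_comm, abs_of_nonneg (by linarith)]] at this

include hSo hS1 hρ hρ0 hρ1 hk in
lemma BB_le {t : ℝ} (ht : t ∈ S) :
    |BB S ρ k t| ≤ 20 * (t - P S t) ∧ |BB S ρ k t| ≤ 20 * (Q S t - t) := by
  have hL := L_pos hSo hS1 ht
  have hL1 := L_le_one hSo hS1 ht
  have hsmem := sg_mem hSo hS1 ht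
  have hLk : (L S t)^k ≤ L S t := by
    calc (L S t)^k ≤ (L S t)^1 := pow_le_pow_of_le_one hL.le hL1 hk
    _ = L S t := pow_one _
  have hLknn : (0:ℝ) ≤ (L S t)^k := pow_nonneg hL.le _
  have habs : |BB S ρ k t| = (L S t)^k * |ρ (sg S t)| := by
    rw [BB, if_pos ht, abs_mul, abs_of_nonneg hLknn]
  have hLne : Q S t - P S t ≠ 0 := by have := hL; unfold L at this; linarith
  have hsg : sg S t * L S t = t - P S t := by
    rw [sg, L]; field_simp
  have hsg' : (1 - sg S t) * L S t = Q S t - t := by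
    have : sg S t * L S t = t - P S t := hsg
    rw [sub_mul, one_mul, this, L]; ring
  constructor
  · calc |BB S ρ k t| = (L S t)^k * |ρ (sg S t)| := habs
      _ ≤ L S t * (20 * sg S t) :=
        mul_le_mul hLk (rho_le1 hSo hS1 hρ hρ0 hsmem.1.le) (abs_nonneg _) hL.le
      _ = 20 * (sg S t * L S t) := by ring
      _ = 20 * (t - P S t) := by rw [hsg]
  · calc |BB S ρ k t| = (L S t)^k * |ρ (sg S t)| := habs
      _ ≤ L S t * (20 * (1 - sg S t)) :=
        mul_le_mul hLk (rho_le2 hSo hS1 hρ hρ1 hsmem.2.le) (abs_nonneg _) hL.le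
      _ = 20 * ((1 - sg S t) * L S t) := by ring
      _ = 20 * (Q S t - t) := by rw [hsg']

include hSo hS1 hρ hρ0 hρ1 hk in
lemma BB_lip_aux {x y : ℝ} (hxy : x ≤ y) : |BB S ρ k x - BB S ρ k y| ≤ 40 * (y - x) := by
  by_cases hx : x ∈ S
  · rcases lt_or_ge y (Q S x) with hlt | hge
    · -- same component
      have hymem : y ∈ Ioo (P S x) (Q S x) := ⟨lt_of_lt_of_le (P_lt hSo hS1 hx) hxy, hlt⟩
      have hy : y ∈ S := Ioo_PQ_subset hSo hS1 x hymem
      have hL := L_pos hSo hS1 hx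
      have hL1 := L_le_one hSo hS1 hx
      have hPy := P_congr hSo hS1 hymem
      have hQy := Q_congr hSo hS1 hymem
      have hLy : L S y = L S x := by rw [L, hPy, hQy, L]
      have hsgy : sg S y = (y - P S x) / L S x := sg_formula hSo hS1 hymem
      have hdiff : BB S ρ k x - BB S ρ k y = (L S x)^k * (ρ (sg S x) - ρ (sg S y)) := by
        rw [BB, BB, if_pos hx, if_pos hy, hLy]; ring
      have hsgx : sg S x = (x - P S x) / L S x := rfl
      have hsgdiff : |sg S x - sg S y| = (y - x) / L S x := by
        calc |sg S x - sg S y| = |(x - y)/(L S x)| := by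
              rw [hsgx, hsgy, div_sub_div_same,
                show x - P S x - (y - P S x) = x - y by ring]
          _ = (y - x)/L S x := by
              rw [abs_div, abs_of_pos hL, abs_of_nonpos (show x - y ≤ 0 by linarith), neg_sub]
      have hLk : (L S x)^k ≤ L S x := by
        calc (L S x)^k ≤ (L S x)^1 := pow_le_pow_of_le_one hL.le hL1 hk
        _ = L S x := pow_one _
      have hnn : (0:ℝ) ≤ 20 * ((y - x) / L S x) := by
        have : (0:ℝ) ≤ (y - x) / L S x := div_nonneg (by linarith) hL.le
        linarith
      calc |BB S ρ k x - BB S ρ k y| = (L S x)^k * |ρ (sg S x) - ρ (sg S y)| := by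
            rw [hdiff, abs_mul, abs_of_nonneg (pow_nonneg hL.le _)]
        _ ≤ (L S x)^k * (20 * ((y - x) / L S x)) := by
            refine mul_le_mul_of_nonneg_left ?_ (pow_nonneg hL.le _)
            have := hρ (sg S x) (sg S y); rwa [hsgdiff] at this
        _ ≤ (L S x) * (20 * ((y - x) / L S x)) := mul_le_mul_of_nonneg_right hLk hnn
        _ = 20 * (y - x) := by field_simp
        _ ≤ 40 * (y - x) := by linarith
    · -- different components
      have h1 : |BB S ρ k x| ≤ 20 * (y - x) :=
        le_trans (BB_le hSo hS1 hρ hρ0 hρ1 hk hx).2 (by linarith)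
      have h2 : |BB S ρ k y| ≤ 20 * (y - x) := by
        by_cases hy : y ∈ S
        · have hPy : Q S x ≤ P S y := le_csSup (P_bdd hSo hS1 y) ⟨Q_not_mem hSo hS1 x, hge⟩
          refine le_trans (BB_le hSo hS1 hρ hρ0 hρ1 hk hy).1 ?_
          have := le_Q hSo hS1 x
          linarith
        · rw [BB_not_mem hSo hS1 hy, abs_zero]; linarith
      calc |BB S ρ k x - BB S ρ k y| ≤ |BB S ρ k x| + |BB S ρ k y| := abs_sub _ _
        _ ≤ 40 * (y - x) := by linarith
  · rw [BB_not_mem hSo hS1 hx, zero_sub, abs_neg]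
    by_cases hy : y ∈ S
    · have hPy : x ≤ P S y := le_csSup (P_bdd hSo hS1 y) ⟨hx, hxy⟩
      refine le_trans (BB_le hSo hS1 hρ hρ0 hρ1 hk hy).1 ?_
      linarith
    · rw [BB_not_mem hSo hS1 hy, abs_zero]; linarith

include hSo hS1 hρ hρ0 hρ1 hk in
lemma BB_lip (x y : ℝ) : |BB S ρ k x - BB S ρ k y| ≤ 40 * |x - y| := by
  rcases le_total x y with h | h
  · rw [abs_of_nonpos (sub_nonpos.2 h), neg_sub]
    exact BB_lip_aux hSo hS1 hρ hρ0 hρ1 hk h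
  · rw [abs_of_nonneg (sub_nonneg.2 h), abs_sub_comm]
    exact BB_lip_aux hSo hS1 hρ hρ0 hρ1 hk h

include hSo hS1 hρ hρ0 hρ1 hk in
lemma BB_small {t u : ℝ} (ht : t ∉ S) :
    |BB S ρ k u| ≤ 20 * (volume (S ∩ uIcc t u)).toReal := by
  by_cases hu : u ∈ S
  · have hfin : volume (S ∩ uIcc t u) ≠ ⊤ := by
      refine ne_top_of_le_ne_top ?_ (measure_mono inter_subset_right)
      rw [Real.volume_interval]; exact ENNReal.ofReal_ne_top
    rcases lt_or_gt_of_ne (show t ≠ u from fun h => ht (h ▸ hu)) with htu | htu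
    · have hPt : t ≤ P S u := le_csSup (P_bdd hSo hS1 u) ⟨ht, htu.le⟩
      have hsub : Ioo (P S u) u ⊆ S ∩ uIcc t u := by
        intro z hz
        refine ⟨Ioo_PQ_subset hSo hS1 u ⟨hz.1, lt_trans hz.2 (lt_Q hSo hS1 hu)⟩, ?_⟩
        rw [uIcc_of_le htu.le]
        exact ⟨le_trans hPt hz.1.le, hz.2.le⟩
      have hvol : u - P S u ≤ (volume (S ∩ uIcc t u)).toReal := by
        have := measure_mono (μ := volume) hsub
        rw [Real.volume_Ioo] at this
        have h2 := ENNReal.toReal_mono hfin this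
        rwa [ENNReal.toReal_ofReal (by linarith [P_lt hSo hS1 hu])] at h2
      exact le_trans (BB_le hSo hS1 hρ hρ0 hρ1 hk hu).1 (by linarith)
    · have hQt : Q S u ≤ t := csInf_le (Q_bdd hSo hS1 u) ⟨ht, htu.le⟩
      have hsub : Ioo u (Q S u) ⊆ S ∩ uIcc t u := by
        intro z hz
        refine ⟨Ioo_PQ_subset hSo hS1 u ⟨lt_trans (P_lt hSo hS1 hu) hz.1, hz.2⟩, ?_⟩
        rw [uIcc_of_ge htu.le]
        exact ⟨hz.1.le, le_trans hz.2.le hQt⟩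
      have hvol : Q S u - u ≤ (volume (S ∩ uIcc t u)).toReal := by
        have := measure_mono (μ := volume) hsub
        rw [Real.volume_Ioo] at this
        have h2 := ENNReal.toReal_mono hfin this
        rwa [ENNReal.toReal_ofReal (by linarith [lt_Q hSo hS1 hu])] at h2
      exact le_trans (BB_le hSo hS1 hρ hρ0 hρ1 hk hu).2 (by linarith)
  · rw [BB_not_mem hSo hS1 hu, abs_zero]
    positivity


/-! ### v3 and c3 basic facts -/

omit hρ hρ0 hρ1 hk

include hSo hS1 in
lemma v3_nonpos (t : ℝ) : v3 S t ≤ 0 := by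
  unfold v3; split_ifs with h
  · nlinarith [sq_nonneg (L S t)]
  · exact le_refl 0

include hSo hS1 in
lemma v3_abs_le (t : ℝ) : |v3 S t| ≤ 3 := by
  unfold v3; split_ifs with h
  · rw [abs_of_nonpos (by nlinarith [sq_nonneg (L S t)])]
    have h1 := L_pos hSo hS1 h.1; have h2 := L_le_one hSo hS1 h.1
    nlinarith
  · norm_num

omit hSo hS1 in
lemma v3_not_mem {t : ℝ} (ht : t ∉ S) : v3 S t = 0 := if_neg (fun h => ht h.1)

include hSo hS1 in
lemma measurable_v3 : Measurable (v3 S) := by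
  have hC : MeasurableSet {t | t ∈ S ∧ (sg S t ∈ Ico (1/6:ℝ) (1/3) ∪ Ico (1/2:ℝ) (2/3))} := by
    have heq : {t | t ∈ S ∧ (sg S t ∈ Ico (1/6:ℝ) (1/3) ∪ Ico (1/2:ℝ) (2/3))} =
        S ∩ sg S ⁻¹' (Ico (1/6:ℝ) (1/3) ∪ Ico (1/2:ℝ) (2/3)) := rfl
    rw [heq]
    exact hSo.measurableSet.inter
      ((measurable_sg hSo hS1) (measurableSet_Ico.union measurableSet_Ico))
  exact Measurable.ite hC (((measurable_L hSo hS1).pow_const 2).const_mul (-3)) measurable_const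

include hSo hS1 in
lemma v3_integrableOn {s : Set ℝ} (hs : volume s ≠ ⊤) : IntegrableOn (v3 S) s := by
  haveI : IsFiniteMeasure (volume.restrict s) :=
    ⟨by rwa [Measure.restrict_apply_univ, lt_top_iff_ne_top]⟩
  refine Integrable.mono' (integrable_const (3:ℝ))
    ((measurable_v3 hSo hS1).aestronglyMeasurable) ?_
  exact ae_of_all _ (fun x => by rw [Real.norm_eq_abs]; exact v3_abs_le hSo hS1 x)

include hSo hS1 in
lemma v3_ii (a b : ℝ) : IntervalIntegrable (v3 S) volume a b :=
  ⟨v3_integrableOn hSo hS1 (by rw [Real.volume_Ioc]; exact ENNReal.ofReal_ne_top),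
   v3_integrableOn hSo hS1 (by rw [Real.volume_Ioc]; exact ENNReal.ofReal_ne_top)⟩

include hSo hS1 in
lemma c3_sub (a b : ℝ) : c3 S b - c3 S a = ∫ u in a..b, v3 S u := by
  unfold c3
  rw [← intervalIntegral.integral_interval_sub_left (v3_ii hSo hS1 0 b) (v3_ii hSo hS1 0 a)]

include hSo hS1 in
lemma c3_lip (x y : ℝ) : |c3 S x - c3 S y| ≤ 3 * |x - y| := by
  rw [c3_sub hSo hS1 y x]
  have hb : ∀ z ∈ Set.uIoc y x, ‖v3 S z‖ ≤ 3 := fun z _ => by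
    rw [Real.norm_eq_abs]; exact v3_abs_le hSo hS1 z
  have := intervalIntegral.norm_integral_le_of_norm_le_const hb
  rwa [Real.norm_eq_abs] at this

/-! ### derivative helpers -/

omit hSo hS1 in
lemma hasDerivAt_affine (A m t : ℝ) : HasDerivAt (fun u => A + m * u) m t := by
  simpa using ((hasDerivAt_id t).const_mul m).const_add A

omit hSo hS1 in
lemma hasDerivAt_E4 {f0 f1 f2 f3 : ℝ → ℝ} {d0 d1 d2 d3 t : ℝ}
    (h0 : HasDerivAt f0 d0 t) (h1 : HasDerivAt f1 d1 t)
    (h2 : HasDerivAt f2 d2 t) (h3 : HasDerivAt f3 d3 t) :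
    HasDerivAt (fun u => EE ![f0 u, f1 u, f2 u, f3 u]) (EE ![d0,d1,d2,d3]) t := by
  have h : ∀ i : Fin 4, HasDerivAt (fun u => ![f0 u, f1 u, f2 u, f3 u] i) (![d0,d1,d2,d3] i) t := by
    intro i; fin_cases i
    · exact h0
    · exact h1
    · exact h2
    · exact h3
  have hF : HasDerivAt (fun u => ![f0 u, f1 u, f2 u, f3 u]) ![d0,d1,d2,d3] t := by
    rw [hasDerivAt_iff_hasFDerivAt]
    have h2' := (hasFDerivAt_pi (𝕜 := ℝ) (φ := fun i u => ![f0 u, f1 u, f2 u, f3 u] i)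
      (φ' := fun i => ContinuousLinearMap.smulRight (1 : ℝ →L[ℝ] ℝ) (![d0,d1,d2,d3] i)) (x := t)).2
      (fun i => (h i).hasFDerivAt)
    exact hasDerivAt_pi.2 h
  exact (EE.toContinuousLinearMap).hasFDerivAt.comp_hasDerivAt t hF

omit hSo hS1 in
lemma E4_norm_le (w : EuclideanSpace ℝ (Fin 4)) : ‖w‖ ≤ |w 0| + |w 1| + |w 2| + |w 3| := by
  rw [EuclideanSpace.norm_eq, Fin.sum_univ_four]
  set a0 := |w 0| with ha0; set a1 := |w 1| with ha1
  set a2 := |w 2| with ha2; set a3 := |w 3| with ha3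
  have h0 : 0 ≤ a0 := abs_nonneg _
  have h1 : 0 ≤ a1 := abs_nonneg _
  have h2 : 0 ≤ a2 := abs_nonneg _
  have h3 : 0 ≤ a3 := abs_nonneg _
  have habs : ∀ x : ℝ, ‖x‖^2 = |x|^2 := fun x => by rw [Real.norm_eq_abs]
  rw [habs, habs, habs, habs, ← ha0, ← ha1, ← ha2, ← ha3]
  refine le_trans (Real.sqrt_le_sqrt
    (show a0^2+a1^2+a2^2+a3^2 ≤ (a0+a1+a2+a3)^2 by nlinarith)) ?_
  rw [Real.sqrt_sq (by positivity)]

/-! ### derivative on S, per phase -/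

include hSo hS1 in
lemma phase_deriv {t : ℝ} (ht : t ∈ S) {a b : ℝ} (ha : 0 ≤ a) (hb : b ≤ 1)
    (hsa : a < sg S t) (hsb : sg S t < b)
    {A0 m0 A1 m1 A2 m2 cv : ℝ}
    (h0 : ∀ s : ℝ, a < s → s < b → L S t * pphi s = A0 + m0 * (P S t + s * L S t))
    (h1 : ∀ s : ℝ, a < s → s < b →
      (P S t + s * L S t) + L S t * pchi s = A1 + m1 * (P S t + s * L S t))
    (h2 : ∀ s : ℝ, a < s → s < b → (L S t)^2 * pome s = A2 + m2 * (P S t + s * L S t))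
    (hv : ∀ u : ℝ, u ∈ S → L S u = L S t → a < sg S u → sg S u < b → v3 S u = cv) :
    HasDerivAt (curve S) (EE ![m0, m1, m2, cv]) t := by
  have hL := L_pos hSo hS1 ht
  have hLne : L S t ≠ 0 := hL.ne'
  have hteq : t = P S t + sg S t * L S t := by
    rw [sg]; field_simp; ring
  have htIoo : t ∈ Ioo (P S t + a * L S t) (P S t + b * L S t) := by
    constructor
    · have := mul_lt_mul_of_pos_right hsa hL; linarith [hteq]
    · have := mul_lt_mul_of_pos_right hsb hL; linarith [hteq]
  have hU : Ioo (P S t + a * L S t) (P S t + b * L S t) ∈ 𝓝 t := Ioo_mem_nhds htIoo.1 htIoo.2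
  have hmemU : ∀ u ∈ Ioo (P S t + a * L S t) (P S t + b * L S t),
      u ∈ S ∧ P S u = P S t ∧ L S u = L S t ∧
      a < sg S u ∧ sg S u < b ∧ P S t + sg S u * L S t = u := by
    intro u hu
    have haL : 0 ≤ a * L S t := mul_nonneg ha hL.le
    have hbL : b * L S t ≤ L S t := by
      have := mul_le_mul_of_nonneg_right hb hL.le; linarith [this]
    have huPQ : u ∈ Ioo (P S t) (Q S t) := by
      constructor
      · linarith [hu.1]
      · have : P S t + b * L S t ≤ Q S t := by unfold L at hbL ⊢; linarith
        linarith [hu.2]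
    have huS : u ∈ S := Ioo_PQ_subset hSo hS1 t huPQ
    have hPu : P S u = P S t := P_congr hSo hS1 huPQ
    have hQu : Q S u = Q S t := Q_congr hSo hS1 huPQ
    have hLu : L S u = L S t := by rw [L, hPu, hQu]; rfl
    have hsgu : sg S u = (u - P S t) / L S t := sg_formula hSo hS1 huPQ
    refine ⟨huS, hPu, hLu, ?_, ?_, ?_⟩
    · rw [hsgu, lt_div_iff₀ hL]; linarith [hu.1]
    · rw [hsgu, div_lt_iff₀ hL]; linarith [hu.2]
    · rw [hsgu]; field_simp; ring
  have e0 : (c0 S) =ᶠ[𝓝 t] (fun u => A0 + m0 * u) := by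
    filter_upwards [hU] with u hu
    obtain ⟨huS, hPu, hLu, hau, hub, hrepr⟩ := hmemU u hu
    have : c0 S u = L S t * pphi (sg S u) := by
      rw [c0, BB, if_pos huS, pow_one, hLu]
    rw [this, h0 (sg S u) hau hub, hrepr]
  have e1 : (c1 S) =ᶠ[𝓝 t] (fun u => A1 + m1 * u) := by
    filter_upwards [hU] with u hu
    obtain ⟨huS, hPu, hLu, hau, hub, hrepr⟩ := hmemU u hu
    have : c1 S u = (P S t + sg S u * L S t) + L S t * pchi (sg S u) := by
      rw [c1, BB, if_pos huS, pow_one, hLu, hrepr]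
    rw [this, h1 (sg S u) hau hub, hrepr]
  have e2 : (c2 S) =ᶠ[𝓝 t] (fun u => A2 + m2 * u) := by
    filter_upwards [hU] with u hu
    obtain ⟨huS, hPu, hLu, hau, hub, hrepr⟩ := hmemU u hu
    have : c2 S u = (L S t)^2 * pome (sg S u) := by
      rw [c2, BB, if_pos huS, hLu]
    rw [this, h2 (sg S u) hau hub, hrepr]
  have e3 : (c3 S) =ᶠ[𝓝 t] (fun u => (c3 S t - cv * t) + cv * u) := by
    filter_upwards [hU] with u hu
    have huu : uIcc t u ⊆ Ioo (P S t + a * L S t) (P S t + b * L S t) :=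
      (Set.ordConnected_Ioo).uIcc_subset htIoo hu
    have hcong : ∀ z ∈ uIcc t u, v3 S z = cv := by
      intro z hz
      obtain ⟨hzS, _, hLz, haz, hzb, _⟩ := hmemU z (huu hz)
      exact hv z hzS hLz haz hzb
    have hsub : c3 S u - c3 S t = cv * (u - t) := by
      rw [c3_sub hSo hS1 t u, intervalIntegral.integral_congr (g := fun _ => cv) hcong,
        intervalIntegral.integral_const, smul_eq_mul]
      ring
    linear_combination hsub
  have d0 : HasDerivAt (c0 S) m0 t := (hasDerivAt_affine A0 m0 t).congr_of_eventuallyEq e0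
  have d1 : HasDerivAt (c1 S) m1 t := (hasDerivAt_affine A1 m1 t).congr_of_eventuallyEq e1
  have d2 : HasDerivAt (c2 S) m2 t := (hasDerivAt_affine A2 m2 t).congr_of_eventuallyEq e2
  have d3 : HasDerivAt (c3 S) cv t :=
    (hasDerivAt_affine (c3 S t - cv * t) cv t).congr_of_eventuallyEq e3
  exact hasDerivAt_E4 d0 d1 d2 d3

include hSo hS1 in
lemma on_S_deriv {t : ℝ} (ht : t ∈ S)
    (hn1 : sg S t ≠ 1/6) (hn2 : sg S t ≠ 1/3) (hn3 : sg S t ≠ 1/2)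
    (hn4 : sg S t ≠ 2/3) (hn5 : sg S t ≠ 5/6) :
    HasDerivAt (curve S) (gvec S t) t ∧ EngelHoriz (curve S t) (gvec S t) := by
  obtain ⟨hs0, hs1⟩ := sg_mem hSo hS1 ht
  rcases lt_or_gt_of_ne hn1 with h1 | h1
  · -- phase 1
    have hg : gvec S t = EE ![6,0,0,0] := by
      rw [gvec, gv, if_neg (not_not_intro ht), if_pos h1]
    refine ⟨?_, ?_⟩
    · rw [hg]
      refine phase_deriv hSo hS1 (A0 := -6*P S t) (m0 := 6) (A1 := P S t) (m1 := 0)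
        (A2 := 0) (m2 := 0) (cv := 0) ht (le_refl 0) (by norm_num) hs0 h1 ?_ ?_ ?_ ?_
      · intro s hsa hsb; rw [pphi_eq1 hsa hsb]; ring
      · intro s hsa hsb; rw [pchi, ppsi_eq1 hsa hsb]; ring
      · intro s hsa hsb; rw [pome_eq1 hsa hsb]; ring
      · intro u huS hLu hau hub
        refine if_neg ?_
        rintro ⟨-, hc | hc⟩
        · have := hc.1; linarith
        · have := hc.1; linarith
    · rw [hg]
      exact ⟨by show (0:ℝ) = 0 * (c0 S t); ring,
             by show (0:ℝ) = 0 * (c0 S t)^2/2; ring⟩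
  rcases lt_or_gt_of_ne hn2 with h2 | h2
  · -- phase 2
    have hg : gvec S t = EE ![0,-6,-6*L S t,-3*(L S t)^2] := by
      rw [gvec, gv, if_neg (not_not_intro ht), if_neg (asymm h1), if_pos h2]
    have hc0 : c0 S t = L S t := by
      rw [c0, BB, if_pos ht, pow_one, pphi_eq2 h1 h2, mul_one]
    refine ⟨?_, ?_⟩
    · rw [hg]
      refine phase_deriv hSo hS1 (A0 := L S t) (m0 := 0) (A1 := L S t + 7*P S t) (m1 := -6)
        (A2 := (L S t)^2 + 6*(L S t)*(P S t)) (m2 := -6*L S t) (cv := -3*(L S t)^2)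
        ht (by norm_num) (by norm_num) h1 h2 ?_ ?_ ?_ ?_
      · intro s hsa hsb; rw [pphi_eq2 hsa hsb]; ring
      · intro s hsa hsb; rw [pchi, ppsi_eq2 hsa hsb]; ring
      · intro s hsa hsb; rw [pome_eq2 hsa hsb]; ring
      · intro u huS hLu hau hub
        rw [v3, if_pos (show u ∈ S ∧ sg S u ∈ Ico (1/6:ℝ) (1/3) ∪ Ico (1/2:ℝ) (2/3) from
          ⟨huS, Set.mem_union_left _ (Set.mem_Ico.mpr ⟨hau.le, hub⟩)⟩), hLu]
    · rw [hg]
      refine ⟨?_, ?_⟩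
      · show -6*L S t = -6 * (c0 S t); rw [hc0]
      · show -3*(L S t)^2 = -6 * (c0 S t)^2/2; rw [hc0]; ring
  rcases lt_or_gt_of_ne hn3 with h3 | h3
  · -- phase 3
    have hg : gvec S t = EE ![-12,0,0,0] := by
      rw [gvec, gv, if_neg (not_not_intro ht), if_neg (asymm h1), if_neg (asymm h2), if_pos h3]
    refine ⟨?_, ?_⟩
    · rw [hg]
      refine phase_deriv hSo hS1 (A0 := 5*L S t + 12*P S t) (m0 := -12) (A1 := P S t - L S t)
        (m1 := 0) (A2 := -(L S t)^2) (m2 := 0) (cv := 0)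
        ht (by norm_num) (by norm_num) h2 h3 ?_ ?_ ?_ ?_
      · intro s hsa hsb; rw [pphi_eq3 hsa hsb]; ring
      · intro s hsa hsb; rw [pchi, ppsi_eq3 hsa hsb]; ring
      · intro s hsa hsb; rw [pome_eq3 hsa hsb]; ring
      · intro u huS hLu hau hub
        refine if_neg ?_
        rintro ⟨-, hc | hc⟩
        · have := hc.2; linarith
        · have := hc.1; linarith
    · rw [hg]
      exact ⟨by show (0:ℝ) = 0 * (c0 S t); ring,
             by show (0:ℝ) = 0 * (c0 S t)^2/2; ring⟩
  rcases lt_or_gt_of_ne hn4 with h4 | h4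
  · -- phase 4
    have hg : gvec S t = EE ![0,-6,6*L S t,-3*(L S t)^2] := by
      rw [gvec, gv, if_neg (not_not_intro ht), if_neg (asymm h1), if_neg (asymm h2),
        if_neg (asymm h3), if_pos h4]
    have hc0 : c0 S t = -(L S t) := by
      rw [c0, BB, if_pos ht, pow_one, pphi_eq4 h3 h4]; ring
    refine ⟨?_, ?_⟩
    · rw [hg]
      refine phase_deriv hSo hS1 (A0 := -(L S t)) (m0 := 0) (A1 := 2*L S t + 7*P S t) (m1 := -6)
        (A2 := -4*(L S t)^2 - 6*(L S t)*(P S t)) (m2 := 6*L S t) (cv := -3*(L S t)^2)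
        ht (by norm_num) (by norm_num) h3 h4 ?_ ?_ ?_ ?_
      · intro s hsa hsb; rw [pphi_eq4 hsa hsb]; ring
      · intro s hsa hsb; rw [pchi, ppsi_eq4 hsa hsb]; ring
      · intro s hsa hsb; rw [pome_eq4 hsa hsb]; ring
      · intro u huS hLu hau hub
        rw [v3, if_pos (show u ∈ S ∧ sg S u ∈ Ico (1/6:ℝ) (1/3) ∪ Ico (1/2:ℝ) (2/3) from
          ⟨huS, Set.mem_union_right _ (Set.mem_Ico.mpr ⟨hau.le, hub⟩)⟩), hLu]
    · rw [hg]
      refine ⟨?_, ?_⟩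
      · show 6*L S t = -6 * (c0 S t); rw [hc0]; ring
      · show -3*(L S t)^2 = -6 * (c0 S t)^2/2; rw [hc0]; ring
  rcases lt_or_gt_of_ne hn5 with h5 | h5
  · -- phase 5
    have hg : gvec S t = EE ![6,0,0,0] := by
      rw [gvec, gv, if_neg (not_not_intro ht), if_neg (asymm h1), if_neg (asymm h2),
        if_neg (asymm h3), if_neg (asymm h4), if_pos h5]
    refine ⟨?_, ?_⟩
    · rw [hg]
      refine phase_deriv hSo hS1 (A0 := -6*P S t - 5*L S t) (m0 := 6) (A1 := P S t - 2*L S t)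
        (m1 := 0) (A2 := 0) (m2 := 0) (cv := 0)
        ht (by norm_num) (by norm_num) h4 h5 ?_ ?_ ?_ ?_
      · intro s hsa hsb; rw [pphi_eq5 hsa hsb]; ring
      · intro s hsa hsb; rw [pchi, ppsi_eq5 hsa hsb]; ring
      · intro s hsa hsb; rw [pome_eq5 hsa (by linarith)]; ring
      · intro u huS hLu hau hub
        refine if_neg ?_
        rintro ⟨-, hc | hc⟩
        · have := hc.2; linarith
        · have := hc.2; linarith
    · rw [hg]
      exact ⟨by show (0:ℝ) = 0 * (c0 S t); ring,
             by show (0:ℝ) = 0 * (c0 S t)^2/2; ring⟩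
  · -- phase 6
    have hg : gvec S t = EE ![0,18,0,0] := by
      rw [gvec, gv, if_neg (not_not_intro ht), if_neg (asymm h1), if_neg (asymm h2),
        if_neg (asymm h3), if_neg (asymm h4), if_neg (asymm h5)]
    have hc0 : c0 S t = 0 := by
      rw [c0, BB, if_pos ht, pow_one, pphi_eq6 h5 hs1, mul_zero]
    refine ⟨?_, ?_⟩
    · rw [hg]
      refine phase_deriv hSo hS1 (A0 := 0) (m0 := 0) (A1 := -17*P S t - 17*L S t)
        (m1 := 18) (A2 := 0) (m2 := 0) (cv := 0)
        ht (by norm_num) (le_refl 1) h5 hs1 ?_ ?_ ?_ ?_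
      · intro s hsa hsb; rw [pphi_eq6 hsa hsb]; ring
      · intro s hsa hsb; rw [pchi, ppsi_eq6 hsa hsb]; ring
      · intro s hsa hsb; rw [pome_eq5 (by linarith) hsb]; ring
      · intro u huS hLu hau hub
        refine if_neg ?_
        rintro ⟨-, hc | hc⟩
        · have := hc.2; linarith
        · have := hc.2; linarith
    · rw [hg]
      refine ⟨?_, ?_⟩
      · show (0:ℝ) = 18 * (c0 S t); rw [hc0]; ring
      · show (0:ℝ) = 18 * (c0 S t)^2/2; rw [hc0]; ring

include hSo hS1 in
lemma repr_eq {t : ℝ} (ht : t ∈ S) : t = P S t + sg S t * L S t := by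
  have hne := (L_pos hSo hS1 ht).ne'
  rw [sg]; field_simp; ring

include hSo hS1 in
lemma c3_small (t u : ℝ) :
    |c3 S u - c3 S t| ≤ 3 * (volume (S ∩ uIcc t u)).toReal := by
  have hfin : volume (S ∩ uIcc t u) ≠ ⊤ := by
    refine ne_top_of_le_ne_top ?_ (measure_mono inter_subset_right)
    rw [Real.volume_interval]; exact ENNReal.ofReal_ne_top
  have hIfin : volume (Set.uIoc t u) ≠ ⊤ := by
    rw [Set.uIoc, Real.volume_Ioc]; exact ENNReal.ofReal_ne_top
  haveI : IsFiniteMeasure (volume.restrict (Set.uIoc t u)) :=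
    ⟨by rwa [Measure.restrict_apply_univ, lt_top_iff_ne_top]⟩
  have hint : IntegrableOn (fun z => ‖v3 S z‖) (Set.uIoc t u) volume :=
    (v3_integrableOn hSo hS1 hIfin).norm
  have hind : IntegrableOn (S.indicator (fun _ => (3:ℝ))) (Set.uIoc t u) volume :=
    (integrable_const (3:ℝ)).indicator hSo.measurableSet
  rw [c3_sub hSo hS1 t u, ← Real.norm_eq_abs, intervalIntegral.norm_intervalIntegral_eq]
  calc ‖∫ z in Set.uIoc t u, v3 S z‖ ≤ ∫ z in Set.uIoc t u, ‖v3 S z‖ := norm_integral_le_integral_norm _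
    _ ≤ ∫ z in Set.uIoc t u, S.indicator (fun _ => (3:ℝ)) z := by
        refine setIntegral_mono_on hint hind measurableSet_uIoc fun z _ => ?_
        by_cases hz : z ∈ S
        · rw [Set.indicator_of_mem hz, Real.norm_eq_abs]; exact v3_abs_le hSo hS1 z
        · rw [Set.indicator_of_notMem hz, Real.norm_eq_abs, v3_not_mem hz, abs_zero]
    _ = (volume (Set.uIoc t u ∩ S)).toReal * 3 := by
        rw [setIntegral_indicator hSo.measurableSet, setIntegral_const, smul_eq_mul, measureReal_def]
    _ ≤ 3 * (volume (S ∩ uIcc t u)).toReal := by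
        have hsub : Set.uIoc t u ∩ S ⊆ S ∩ uIcc t u := by
          rintro z ⟨hz1, hz2⟩; exact ⟨hz2, uIoc_subset_uIcc hz1⟩
        have := ENNReal.toReal_mono hfin (measure_mono hsub)
        linarith

include hSo hS1 in
lemma key_est {t : ℝ} (ht : t ∉ S) (u : ℝ) :
    ‖curve S u - curve S t - (u - t) • e₂‖ ≤ 63 * (volume (S ∩ uIcc t u)).toReal := by
  set w := curve S u - curve S t - (u - t) • e₂ with hw
  set V := (volume (S ∩ uIcc t u)).toReal with hV
  have hVnn : 0 ≤ V := ENNReal.toReal_nonneg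
  have h1phi : (1:ℕ) ≤ 1 := le_refl 1
  have h1om : (1:ℕ) ≤ 2 := by norm_num
  have hw0 : w 0 = BB S pphi 1 u := by
    rw [hw]
    show c0 S u - c0 S t - (u - t) * (0:ℝ) = BB S pphi 1 u
    rw [show c0 S t = 0 from BB_not_mem hSo hS1 ht]
    show BB S pphi 1 u - 0 - (u - t) * 0 = BB S pphi 1 u
    ring
  have hw1 : w 1 = BB S pchi 1 u := by
    rw [hw]
    show c1 S u - c1 S t - (u - t) * (1:ℝ) = BB S pchi 1 u
    show (u + BB S pchi 1 u) - (t + BB S pchi 1 t) - (u - t) * 1 = BB S pchi 1 u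
    rw [show BB S pchi 1 t = 0 from BB_not_mem hSo hS1 ht]
    ring
  have hw2 : w 2 = BB S pome 2 u := by
    rw [hw]
    show c2 S u - c2 S t - (u - t) * (0:ℝ) = BB S pome 2 u
    rw [show c2 S t = 0 from BB_not_mem hSo hS1 ht]
    show BB S pome 2 u - 0 - (u - t) * 0 = BB S pome 2 u
    ring
  have hw3 : w 3 = c3 S u - c3 S t := by
    rw [hw]
    show c3 S u - c3 S t - (u - t) * (0:ℝ) = c3 S u - c3 S t
    ring
  calc ‖w‖ ≤ |w 0| + |w 1| + |w 2| + |w 3| := E4_norm_le w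
    _ ≤ 20 * V + 20 * V + 20 * V + 3 * V := by
        rw [hw0, hw1, hw2, hw3]
        have b0 := BB_small hSo hS1 pphi_lip pphi_zero pphi_one h1phi (ht := ht) (u := u)
        have b1 := BB_small hSo hS1 pchi_lip pchi_zero pchi_one h1phi (ht := ht) (u := u)
        have b2 := BB_small hSo hS1 pome_lip pome_zero pome_one h1om (ht := ht) (u := u)
        have b3 := c3_small hSo hS1 t u
        rw [← hV] at b0 b1 b2 b3
        gcongr <;> linarith
    _ = 63 * V := by ring

include hSo hS1 in
lemma deriv_off_S {t : ℝ} (ht : t ∉ S)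
    (hd : Tendsto (fun r => volume (S ∩ closedBall t r) / volume (closedBall t r))
      (𝓝[>] 0) (𝓝 0)) :
    HasDerivAt (curve S) e₂ t := by
  rw [hasDerivAt_iff_isLittleO, Asymptotics.isLittleO_iff]
  intro c hc
  have hc' : (0:ℝ≥0∞) < ENNReal.ofReal (c/200) := by
    rw [ENNReal.ofReal_pos]; positivity
  have hev : ∀ᶠ r in 𝓝[>] (0:ℝ),
      volume (S ∩ closedBall t r) / volume (closedBall t r) < ENNReal.ofReal (c/200) :=
    hd.eventually (gt_mem_nhds hc')
  rw [eventually_nhdsWithin_iff] at hev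
  rcases Metric.eventually_nhds_iff.1 hev with ⟨δ, hδpos, hδ⟩
  filter_upwards [Metric.ball_mem_nhds t hδpos] with u hu
  by_cases hut : u = t
  · subst hut; simp
  · set r := |u - t| with hr
    have hrpos : 0 < r := abs_pos.2 (sub_ne_zero.2 hut)
    have hrδ : dist r 0 < δ := by
      rw [Real.dist_eq, sub_zero, abs_abs]
      rw [Metric.mem_ball, Real.dist_eq] at hu
      exact hu
    have hlt := hδ hrδ (mem_Ioi.2 hrpos)
    have hcb : volume (closedBall t r) = ENNReal.ofReal (2*r) := Real.volume_closedBall t r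
    have hne0 : volume (closedBall t r) ≠ 0 := by
      rw [hcb]; simp [ENNReal.ofReal_eq_zero]; linarith
    have hfin : volume (closedBall t r) ≠ ⊤ := by rw [hcb]; exact ENNReal.ofReal_ne_top
    rw [ENNReal.div_lt_iff (Or.inl hne0) (Or.inl hfin)] at hlt
    have hVle : (volume (S ∩ uIcc t u)).toReal ≤ (c/200) * (2*r) := by
      have hsub : uIcc t u ⊆ closedBall t r := by
        intro z hz
        have hz1 : min t u ≤ z := by
          rw [uIcc] at hz; exact hz.1
        have hz2 : z ≤ max t u := by
          rw [uIcc] at hz; exact hz.2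
        rw [Metric.mem_closedBall, Real.dist_eq, abs_sub_le_iff]
        constructor
        · have : max t u - t ≤ r := by
            rcases le_total t u with h | h
            · rw [max_eq_right h, hr, abs_of_nonneg (by linarith)]
            · rw [max_eq_left h]; linarith
          linarith [hz2]
        · have : t - min t u ≤ r := by
            rcases le_total t u with h | h
            · rw [min_eq_left h]; linarith
            · rw [min_eq_right h, hr, abs_of_nonpos (show u - t ≤ 0 by linarith)]; linarith
          linarith [hz1]
      have hmono := measure_mono (μ := volume) (inter_subset_inter_right S hsub)
      have hlt3 := lt_of_le_of_lt hmono hlt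
      rw [hcb, ← ENNReal.ofReal_mul (by positivity)] at hlt3
      have h4 := ENNReal.toReal_mono ENNReal.ofReal_ne_top hlt3.le
      rwa [ENNReal.toReal_ofReal (by positivity)] at h4
    calc ‖curve S u - curve S t - (u - t) • e₂‖
        ≤ 63 * (volume (S ∩ uIcc t u)).toReal := key_est hSo hS1 ht u
      _ ≤ 63 * ((c/200) * (2*r)) := by
          exact mul_le_mul_of_nonneg_left hVle (by norm_num)
      _ ≤ c * ‖u - t‖ := by
          rw [Real.norm_eq_abs, ← hr]
          nlinarith [mul_pos hc hrpos]

include hSo hS1 in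
lemma level_countable (k : ℝ) : Set.Countable {t | t ∈ S ∧ sg S t = k} := by
  have hsub : {t | t ∈ S ∧ sg S t = k} ⊆
      ⋃ q : ℚ, {t | t ∈ S ∧ sg S t = k ∧ P S t < (q:ℝ) ∧ (q:ℝ) < Q S t} := by
    rintro t ⟨ht, hsg⟩
    obtain ⟨q, hq1, hq2⟩ := exists_rat_btwn (lt_trans (P_lt hSo hS1 ht) (lt_Q hSo hS1 ht))
    exact mem_iUnion.2 ⟨q, ht, hsg, hq1, hq2⟩
  refine Set.Countable.mono hsub (Set.countable_iUnion fun q => ?_)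
  apply Set.Subsingleton.countable
  rintro x ⟨hx, hsgx, hqx1, hqx2⟩ y ⟨hy, hsgy, hqy1, hqy2⟩
  have hP : P S x = P S y := by
    rw [← P_congr hSo hS1 (show (q:ℝ) ∈ Ioo (P S x) (Q S x) from ⟨hqx1, hqx2⟩),
        ← P_congr hSo hS1 (show (q:ℝ) ∈ Ioo (P S y) (Q S y) from ⟨hqy1, hqy2⟩)]
  have hQ : Q S x = Q S y := by
    rw [← Q_congr hSo hS1 (show (q:ℝ) ∈ Ioo (P S x) (Q S x) from ⟨hqx1, hqx2⟩),
        ← Q_congr hSo hS1 (show (q:ℝ) ∈ Ioo (P S y) (Q S y) from ⟨hqy1, hqy2⟩)]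
  have hx' := repr_eq hSo hS1 hx
  have hy' := repr_eq hSo hS1 hy
  rw [hsgx] at hx'; rw [hsgy] at hy'
  rw [hx', hy', hP, L, L, hP, hQ]

include hSo hS1 in
lemma curve_lip : LipschitzWith 200 (curve S) := by
  refine LipschitzWith.of_dist_le_mul fun x y => ?_
  rw [dist_eq_norm]
  set w := curve S x - curve S y with hw
  have hd : dist x y = |x - y| := Real.dist_eq x y
  have hw0 : w 0 = BB S pphi 1 x - BB S pphi 1 y := rfl
  have hw1 : w 1 = (x + BB S pchi 1 x) - (y + BB S pchi 1 y) := rfl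
  have hw2 : w 2 = BB S pome 2 x - BB S pome 2 y := rfl
  have hw3 : w 3 = c3 S x - c3 S y := rfl
  have b0 := BB_lip hSo hS1 pphi_lip pphi_zero pphi_one (le_refl 1) x y
  have b1 := BB_lip hSo hS1 pchi_lip pchi_zero pchi_one (le_refl 1) x y
  have b2 := BB_lip hSo hS1 pome_lip pome_zero pome_one (by norm_num : (1:ℕ) ≤ 2) x y
  have b3 := c3_lip hSo hS1 x y
  have habs := abs_nonneg (x - y)
  calc ‖w‖ ≤ |w 0| + |w 1| + |w 2| + |w 3| := E4_norm_le w
    _ ≤ 40*|x-y| + 41*|x-y| + 40*|x-y| + 3*|x-y| := by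
        rw [hw0, hw1, hw2, hw3]
        have hb1 : |(x + BB S pchi 1 x) - (y + BB S pchi 1 y)| ≤ 41*|x-y| := by
          calc |(x + BB S pchi 1 x) - (y + BB S pchi 1 y)|
              = |(x - y) + (BB S pchi 1 x - BB S pchi 1 y)| := by ring_nf
            _ ≤ |x - y| + |BB S pchi 1 x - BB S pchi 1 y| := abs_add_le _ _
            _ ≤ 41*|x-y| := by linarith
        gcongr <;> linarith
    _ ≤ 200 * dist x y := by rw [hd]; push_cast; linarith

omit hSo hS1 in
lemma e2_eq : e₂ = EE ![0,1,0,0] := by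
  ext i; fin_cases i <;> rfl

include hSo hS1 in
lemma c3_strict {a b : ℝ} (ha : a ∉ S) (hb : b ∉ S) (hab : a < b)
    (hx : ∃ x, x ∈ S ∧ a < x ∧ x < b) : c3 S b < c3 S a := by
  obtain ⟨x, hxS, hax, hxb⟩ := hx
  have hL := L_pos hSo hS1 hxS
  have hap : a ≤ P S x := le_csSup (P_bdd hSo hS1 x) ⟨ha, hax.le⟩
  have hqb : Q S x ≤ b := csInf_le (Q_bdd hSo hS1 x) ⟨hb, hxb.le⟩
  have hql : P S x + L S x = Q S x := by rw [L]; ring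
  have hlq : 0 < L S x := hL
  set J : Set ℝ := Ioc (P S x + L S x/6) (P S x + L S x/4) with hJ
  have hJmeas : MeasurableSet J := measurableSet_Ioc
  have hJsub : J ⊆ Ioc a b := by
    intro z hz
    refine ⟨by linarith [hz.1], by linarith [hz.2]⟩
  have hmemJ : ∀ z ∈ J, v3 S z = -3*(L S x)^2 := by
    intro z hz
    have hzPQ : z ∈ Ioo (P S x) (Q S x) := ⟨by linarith [hz.1], by linarith [hz.2]⟩
    have hzS : z ∈ S := Ioo_PQ_subset hSo hS1 x hzPQ
    have hsg : sg S z = (z - P S x)/L S x := sg_formula hSo hS1 hzPQ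
    have hL' : L S z = L S x := by
      rw [L, P_congr hSo hS1 hzPQ, Q_congr hSo hS1 hzPQ]; rfl
    have hs1 : 1/6 < sg S z := by rw [hsg, lt_div_iff₀ hL]; linarith [hz.1]
    have hs2 : sg S z < 1/3 := by rw [hsg, div_lt_iff₀ hL]; linarith [hz.2]
    rw [v3, if_pos (show z ∈ S ∧ sg S z ∈ Ico (1/6:ℝ) (1/3) ∪ Ico (1/2:ℝ) (2/3) from
      ⟨hzS, Set.mem_union_left _ (Set.mem_Ico.mpr ⟨hs1.le, hs2⟩)⟩), hL']
  have hintJ : ∫ z in J, v3 S z = -(L S x)^3/4 := by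
    rw [setIntegral_congr_fun hJmeas hmemJ, setIntegral_const, measureReal_def, hJ, Real.volume_Ioc,
      show P S x + L S x/4 - (P S x + L S x/6) = L S x/12 by ring,
      ENNReal.toReal_ofReal (by linarith), smul_eq_mul]
    ring
  have hfinJ : volume J ≠ ⊤ := by rw [hJ, Real.volume_Ioc]; exact ENNReal.ofReal_ne_top
  have hfinD : volume (Ioc a b \ J) ≠ ⊤ := by
    refine ne_top_of_le_ne_top ?_ (measure_mono diff_subset)
    rw [Real.volume_Ioc]; exact ENNReal.ofReal_ne_top
  have hsplit : ∫ z in Ioc a b, v3 S z = (∫ z in J, v3 S z) + ∫ z in Ioc a b \ J, v3 S z := by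
    conv_lhs => rw [← union_diff_cancel hJsub]
    exact setIntegral_union disjoint_sdiff_right (measurableSet_Ioc.diff hJmeas)
      (v3_integrableOn hSo hS1 hfinJ) (v3_integrableOn hSo hS1 hfinD)
  have hnonpos : ∫ z in Ioc a b \ J, v3 S z ≤ 0 :=
    setIntegral_nonpos (measurableSet_Ioc.diff hJmeas) (fun z _ => v3_nonpos hSo hS1 z)
  have hkey : c3 S b - c3 S a ≤ -(L S x)^3/4 := by
    rw [c3_sub hSo hS1 a b, intervalIntegral.integral_of_le hab.le, hsplit, hintJ]
    linarith
  nlinarith [pow_pos hL 3]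

end Main
end
end BadEngel

open BadEngel

/-- There exist a dense open subset `S` of `(0,1)` of measure less than `ε` and a
Lipschitz horizontal curve `γ` in the Engel group such that `γ' = (0,1,0,0)` almost
everywhere on `(0,1) ∖ S` while `γ₄` is strictly decreasing on `(0,1) ∖ S`. -/
theorem bad_engel_curve (ε : ℝ) (hε : 0 < ε) :
    ∃ (S : Set ℝ) (γ : ℝ → EuclideanSpace ℝ (Fin 4)),
      IsOpen S ∧ S ⊆ Set.Ioo 0 1 ∧ volume S < ENNReal.ofReal ε ∧
      Set.Ioo (0:ℝ) 1 ⊆ closure S ∧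
      (∃ K : NNReal, LipschitzOnWith K γ (Set.Icc 0 1)) ∧
      (∃ g : ℝ → EuclideanSpace ℝ (Fin 4),
        ∀ᵐ t ∂(volume.restrict (Set.Ioo (0:ℝ) 1)),
          HasDerivAt γ (g t) t ∧ EngelHoriz (γ t) (g t)) ∧
      (∀ᵐ t ∂(volume.restrict (Set.Ioo (0:ℝ) 1 \ S)), HasDerivAt γ e₂ t) ∧
      (∀ a ∈ Set.Ioo (0:ℝ) 1 \ S, ∀ b ∈ Set.Ioo (0:ℝ) 1 \ S,
        a < b → γ b 3 < γ a 3) := by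
  classical
  set f : ℕ → ℝ := fun n => (((Denumerable.eqv ℚ).symm n : ℚ) : ℝ) with hf_def
  have hf : DenseRange f := by
    have h2 : Function.Surjective ((Denumerable.eqv ℚ).symm) := (Denumerable.eqv ℚ).symm.surjective
    have h3 : Set.range f = Set.range ((↑) : ℚ → ℝ) := Function.Surjective.range_comp h2 _
    unfold DenseRange
    rw [h3]
    exact Rat.denseRange_cast
  set U : Set ℝ := ⋃ n : ℕ, Ioo (f n - ε/8 * (1/2)^n) (f n + ε/8 * (1/2)^n) with hU
  set S : Set ℝ := U ∩ Ioo 0 1 with hS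
  have hSo : IsOpen S := (isOpen_iUnion (fun n => isOpen_Ioo)).inter isOpen_Ioo
  have hS1 : S ⊆ Ioo 0 1 := inter_subset_right
  have hvol : volume S < ENNReal.ofReal ε := by
    have h1 : volume S ≤ volume U := measure_mono inter_subset_left
    have h2 := measure_iUnion_le (μ := volume)
      (s := fun n : ℕ => Ioo (f n - ε/8 * (1/2)^n) (f n + ε/8 * (1/2)^n))
    have h3 : ∀ n : ℕ, volume (Ioo (f n - ε/8 * (1/2)^n) (f n + ε/8 * (1/2)^n)) =
        ENNReal.ofReal (ε/4 * (1/2)^n) := by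
      intro n; rw [Real.volume_Ioo]; congr 1; ring
    have hsum : Summable (fun n : ℕ => ε/4 * (1/2)^n) :=
      (summable_geometric_of_lt_one (by norm_num) (by norm_num)).mul_left _
    have h4 : (∑' n : ℕ, volume (Ioo (f n - ε/8 * (1/2)^n) (f n + ε/8 * (1/2)^n)))
        = ENNReal.ofReal (ε/2) := by
      simp_rw [h3]
      rw [← ENNReal.ofReal_tsum_of_nonneg (fun n => by positivity) hsum]
      congr 1
      rw [tsum_mul_left, tsum_geometric_of_lt_one (by norm_num) (by norm_num)]
      norm_num
      try ring
    have h5 : volume S ≤ ENNReal.ofReal (ε/2) := le_trans h1 (le_trans h2 (le_of_eq h4))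
    refine lt_of_le_of_lt h5 ?_
    rw [ENNReal.ofReal_lt_ofReal_iff hε]
    linarith
  have hdense : Ioo (0:ℝ) 1 ⊆ closure S := by
    intro x hx
    rw [_root_.mem_closure_iff]
    intro o ho hxo
    obtain ⟨n, hn⟩ := hf.exists_mem_open (ho.inter isOpen_Ioo) ⟨x, hxo, hx⟩
    refine ⟨f n, hn.1, ?_, hn.2⟩
    rw [hU]
    refine mem_iUnion.2 ⟨n, ?_⟩
    constructor
    · have : (0:ℝ) < ε/8 * (1/2)^n := by positivity
      linarith
    · have : (0:ℝ) < ε/8 * (1/2)^n := by positivity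
      linarith
  have hBes := Besicovitch.ae_tendsto_measure_inter_div_of_measurableSet volume hSo.measurableSet
  have hbadc : Set.Countable {t | t ∈ S ∧ (sg S t = 1/6 ∨ sg S t = 1/3 ∨ sg S t = 1/2 ∨
      sg S t = 2/3 ∨ sg S t = 5/6)} := by
    have hsub : {t | t ∈ S ∧ (sg S t = 1/6 ∨ sg S t = 1/3 ∨ sg S t = 1/2 ∨
        sg S t = 2/3 ∨ sg S t = 5/6)} ⊆
        {t | t ∈ S ∧ sg S t = 1/6} ∪ ({t | t ∈ S ∧ sg S t = 1/3} ∪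
        ({t | t ∈ S ∧ sg S t = 1/2} ∪ ({t | t ∈ S ∧ sg S t = 2/3} ∪
        {t | t ∈ S ∧ sg S t = 5/6}))) := by
      rintro t ⟨ht, h | h | h | h | h⟩
      · exact Or.inl ⟨ht, h⟩
      · exact Or.inr (Or.inl ⟨ht, h⟩)
      · exact Or.inr (Or.inr (Or.inl ⟨ht, h⟩))
      · exact Or.inr (Or.inr (Or.inr (Or.inl ⟨ht, h⟩)))
      · exact Or.inr (Or.inr (Or.inr (Or.inr ⟨ht, h⟩)))
    exact Set.Countable.mono hsub ((level_countable hSo hS1 _).union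
      ((level_countable hSo hS1 _).union ((level_countable hSo hS1 _).union
      ((level_countable hSo hS1 _).union (level_countable hSo hS1 _)))))
  have hbad0 : ∀ᵐ t ∂(volume : Measure ℝ), t ∉ {t | t ∈ S ∧ (sg S t = 1/6 ∨ sg S t = 1/3 ∨
      sg S t = 1/2 ∨ sg S t = 2/3 ∨ sg S t = 5/6)} :=
    measure_eq_zero_iff_ae_notMem.mp (hbadc.measure_zero _)
  refine ⟨S, curve S, hSo, hS1, hvol, hdense,
    ⟨200, LipschitzWith.lipschitzOnWith (curve_lip hSo hS1) (s := Set.Icc 0 1)⟩, ⟨gvec S, ?_⟩, ?_, ?_⟩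
  · -- horizontal derivative a.e. on (0,1)
    filter_upwards [ae_restrict_of_ae hbad0, ae_restrict_of_ae hBes] with t hnb htend
    by_cases htS : t ∈ S
    · have h6 : sg S t ≠ 1/6 := fun h => hnb ⟨htS, Or.inl h⟩
      have h3 : sg S t ≠ 1/3 := fun h => hnb ⟨htS, Or.inr (Or.inl h)⟩
      have h2 : sg S t ≠ 1/2 := fun h => hnb ⟨htS, Or.inr (Or.inr (Or.inl h))⟩
      have h23 : sg S t ≠ 2/3 := fun h => hnb ⟨htS, Or.inr (Or.inr (Or.inr (Or.inl h)))⟩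
      have h56 : sg S t ≠ 5/6 := fun h => hnb ⟨htS, Or.inr (Or.inr (Or.inr (Or.inr h)))⟩
      exact on_S_deriv hSo hS1 htS h6 h3 h2 h23 h56
    · rw [Set.indicator_of_notMem htS] at htend
      have hgv : gvec S t = e₂ := by rw [gvec, gv, if_pos htS, ← e2_eq]
      rw [hgv]
      refine ⟨deriv_off_S hSo hS1 htS htend, ?_, ?_⟩
      · show (0:ℝ) = 1 * (c0 S t)
        rw [show c0 S t = 0 from BB_not_mem hSo hS1 htS]; ring
      · show (0:ℝ) = 1 * (c0 S t)^2/2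
        rw [show c0 S t = 0 from BB_not_mem hSo hS1 htS]; ring
  · -- derivative e₂ a.e. off S
    have h3 : ∀ᵐ t ∂(volume.restrict (Ioo (0:ℝ) 1 \ S)), t ∈ Ioo (0:ℝ) 1 \ S :=
      ae_restrict_mem (measurableSet_Ioo.diff hSo.measurableSet)
    filter_upwards [ae_restrict_of_ae hBes, h3] with t htend hmem
    rw [Set.indicator_of_notMem hmem.2] at htend
    exact deriv_off_S hSo hS1 hmem.2 htend
  · -- strict decrease
    rintro a ⟨haI, haS⟩ b ⟨hbI, hbS⟩ hab
    have hmid : (a+b)/2 ∈ Ioo (0:ℝ) 1 := ⟨by linarith [haI.1], by linarith [hbI.2]⟩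
    have hcl := hdense hmid
    rw [_root_.mem_closure_iff] at hcl
    obtain ⟨x, hxo, hxS⟩ := hcl (Ioo a b) isOpen_Ioo ⟨by linarith, by linarith⟩
    exact c3_strict hSo hS1 haS hbS hab ⟨x, hxS, hxo.1, hxo.2⟩
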